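/- For every z ∈ 𝔻, h(f(z)) = g(h(z)); that is, h is a topological conjugacy from f to g. -/

import Mathlib

/-- The open unit disk in `ℂ`. -/
def unitDisk : Set ℂ := {z : ℂ | ‖z‖ < 1}

/-- The map `f` on the open unit disk. -/
noncomputable def mapF (z : ℂ) : ℂ :=
  if z = 0 then 0 else
    (Real.exp 1 * z / (Real.exp 1 * ‖z‖ - ‖z‖ + 1)) *
      Complex.exp (2 * Real.pi * Complex.I *
        Real.log (‖z‖ / (1 - ‖z‖)))

/-- The map `F`, the inverse of `f`, on the open unit disk. -/
noncomputable def mapFinv (w : ℂ) : ℂ :=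
  if w = 0 then 0 else
    ((Real.exp 1)⁻¹ * w / ((Real.exp 1)⁻¹ * ‖w‖ - ‖w‖ + 1)) *
      Complex.exp (-(2 * Real.pi * Complex.I *
        Real.log (‖w‖ / (1 - ‖w‖))))

/-- The map `g` on `ℂ`. -/
noncomputable def mapG (z : ℂ) : ℂ :=
  if z = 0 then 0 else
    Real.exp 1 * z * Complex.exp (2 * Real.pi * Complex.I * Real.log (‖z‖))

/-- The map `G`, the inverse of `g`, on `ℂ`. -/
noncomputable def mapGinv (w : ℂ) : ℂ :=
  if w = 0 then 0 else
    (Real.exp 1)⁻¹ * w * Complex.exp (-(2 * Real.pi * Complex.I * Real.log (‖w‖)))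

/-- The conjugacy `h` from the open unit disk onto `ℂ`. -/
noncomputable def mapH (z : ℂ) : ℂ := z / (1 - ‖z‖)

/-- The inverse of the conjugacy `h`. -/
noncomputable def mapHinv (w : ℂ) : ℂ := w / (1 + ‖w‖)

/-- `h` conjugates `f` to `g`: `h ∘ f = g ∘ h` on the open unit disk. -/
theorem stmt_8 : ∀ z ∈ unitDisk, mapH (mapF z) = mapG (mapH z) := by
  intro z hz
  by_cases h0 : z = 0
  · simp [h0, mapF, mapG, mapH]
  have hr0 : 0 < ‖z‖ := norm_pos_iff.mpr h0
  have hr1 : ‖z‖ < 1 := hz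
  set r := ‖z‖ with hrdef
  have he : (1:ℝ) < Real.exp 1 := by
    have := Real.add_one_lt_exp (by norm_num : (1:ℝ) ≠ 0); linarith
  have hD : 0 < Real.exp 1 * r - r + 1 := by nlinarith
  have h1r : 0 < 1 - r := by linarith
  have hE : ∀ t : ℝ, ‖Complex.exp (2 * Real.pi * Complex.I * (t:ℂ))‖ = 1 := by
    intro t
    have h : (2 * Real.pi * Complex.I * (t:ℂ)) = ((2*Real.pi*t : ℝ):ℂ) * Complex.I := by
      push_cast; ring
    rw [h, Complex.norm_exp]
    simp
  have hDc : ((Real.exp 1 : ℂ) * r - r + 1) = ((Real.exp 1 * r - r + 1 : ℝ) : ℂ) := by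
    push_cast; ring
  have habsF : ‖mapF z‖ = Real.exp 1 * r / (Real.exp 1 * r - r + 1) := by
    rw [mapF, if_neg h0, norm_mul, hE, mul_one, norm_div, norm_mul, hDc]
    rw [Complex.norm_real, Real.norm_eq_abs, Complex.norm_real, Real.norm_eq_abs, abs_of_pos hD, abs_of_pos (Real.exp_pos 1)]
  have habsH : ‖mapH z‖ = r / (1 - r) := by
    rw [mapH, norm_div]
    have : ((1:ℂ) - r) = ((1 - r : ℝ) : ℂ) := by push_cast; ring
    rw [this, Complex.norm_real, Real.norm_eq_abs, abs_of_pos h1r]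
  have hHz : mapH z ≠ 0 := by
    rw [mapH]
    apply div_ne_zero h0
    rw [hDc] at *
    intro hcontra
    have : ((1:ℂ) - r) = ((1 - r : ℝ) : ℂ) := by push_cast; ring
    rw [this] at hcontra
    exact absurd (Complex.ofReal_eq_zero.mp hcontra) (ne_of_gt h1r)
  rw [mapH, habsF, mapG, if_neg hHz, habsH, mapH, mapF, if_neg h0]
  have h1 : ((1 - r : ℝ) : ℂ) ≠ 0 := Complex.ofReal_ne_zero.mpr h1r.ne'
  have h2 : ((Real.exp 1 * r - r + 1 : ℝ) : ℂ) ≠ 0 := Complex.ofReal_ne_zero.mpr hD.ne'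
  have h3 : ((Real.exp 1 : ℂ) * r - r + 1) ≠ 0 := by rw [hDc]; exact h2
  have key : (1:ℂ) - ((Real.exp 1 * r / (Real.exp 1 * r - r + 1) : ℝ) : ℂ)
      = ((1 - r : ℝ) : ℂ) / ((Real.exp 1 * r - r + 1 : ℝ) : ℂ) := by
    rw [Complex.ofReal_div]
    have hba : (1 - r : ℝ) = (Real.exp 1 * r - r + 1) - Real.exp 1 * r := by ring
    rw [hba, Complex.ofReal_sub, sub_div, div_self h2]
  rw [key, hDc]
  have h4 : ((1:ℂ) - r) = ((1 - r : ℝ) : ℂ) := by push_cast; ring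
  rw [h4]
  set E := Complex.exp (2 * Real.pi * Complex.I * Real.log (‖z‖ / (1 - ‖z‖)))
  have step1 : ((Real.exp 1 : ℂ) * z / ((Real.exp 1 * r - r + 1 : ℝ) : ℂ)) * E
      = ((Real.exp 1 : ℂ) * z * E) / ((Real.exp 1 * r - r + 1 : ℝ) : ℂ) := by ring
  rw [step1]
  have cancel : (Real.exp 1 : ℂ) * z * E / ((Real.exp 1 * r - r + 1 : ℝ) : ℂ)
        / (((1 - r : ℝ) : ℂ) / ((Real.exp 1 * r - r + 1 : ℝ) : ℂ))
      = (Real.exp 1 : ℂ) * z * E / ((1 - r : ℝ) : ℂ) := by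
    rw [div_div_div_cancel_right₀]
    exact h2
  rw [cancel]
  ring
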